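/- Let G ≤ Sym(X) be a subgroup that is closed in Sym(X). Then G is locally compact (with the subspace topology) if and only if there exists a finite subset Y ⊆ X whose pointwise stabilizer G_(Y) is compact. -/

import Mathlib

/-- Let `G ≤ Sym(X)` be a subgroup that is closed in `Sym(X)`. Then `G` is
locally compact (with the subspace topology) if and only if there exists a finite subset
`Y ⊆ X` whose pointwise stabilizer `G_(Y)` is compact. -/
theorem statement5 (X : Type*) :
    letI : TopologicalSpace X := ⊥
    letI : TopologicalSpace (Equiv.Perm X) :=
      TopologicalSpace.induced (fun g => (g : X → X)) Pi.topologicalSpace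
    ∀ G : Subgroup (Equiv.Perm X), IsClosed (G : Set (Equiv.Perm X)) →
      (LocallyCompactSpace G ↔
        ∃ Y : Finset X,
          IsCompact {g : Equiv.Perm X | g ∈ G ∧ ∀ y ∈ Y, g y = y}) := by
  letI : TopologicalSpace X := ⊥
  haveI : DiscreteTopology X := ⟨rfl⟩
  letI : TopologicalSpace (Equiv.Perm X) :=
    TopologicalSpace.induced (fun g => (g : X → X)) Pi.topologicalSpace
  intro G hG
  classical
  -- evaluation maps are continuous
  have hcont : ∀ x : X, Continuous fun g : Equiv.Perm X => g x :=
    fun x => (continuous_apply x).comp continuous_induced_dom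
  -- basic sets are open
  have hopen : ∀ (Y : Finset X) (g₀ : Equiv.Perm X),
      IsOpen {g : Equiv.Perm X | ∀ y ∈ Y, g y = g₀ y} := by
    intro Y g₀
    have : {g : Equiv.Perm X | ∀ y ∈ Y, g y = g₀ y}
        = ⋂ y ∈ Y, {g : Equiv.Perm X | g y = g₀ y} := by
      ext g; simp
    rw [this]
    exact isOpen_biInter_finset fun y _ =>
      (isOpen_discrete ({g₀ y} : Set X)).preimage (hcont y)
  -- basic sets are closed
  have hclosed : ∀ (Y : Finset X) (g₀ : Equiv.Perm X),
      IsClosed {g : Equiv.Perm X | ∀ y ∈ Y, g y = g₀ y} := by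
    intro Y g₀
    have : {g : Equiv.Perm X | ∀ y ∈ Y, g y = g₀ y}
        = ⋂ y ∈ Y, {g : Equiv.Perm X | g y = g₀ y} := by
      ext g; simp
    rw [this]
    exact isClosed_biInter fun y _ =>
      (isClosed_discrete ({g₀ y} : Set X)).preimage (hcont y)
  -- basic sets form a neighbourhood basis
  have factC : ∀ (g₀ : Equiv.Perm X) (s : Set (Equiv.Perm X)), s ∈ nhds g₀ →
      ∃ Y : Finset X, {g : Equiv.Perm X | ∀ y ∈ Y, g y = g₀ y} ⊆ s := by
    intro g₀ s hs
    rw [nhds_induced] at hs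
    obtain ⟨t, ht, hts⟩ := hs
    obtain ⟨t', ht'sub, ht'o, hmem⟩ := mem_nhds_iff.1 ht
    obtain ⟨I, u, hu, hpi⟩ := isOpen_pi_iff.1 ht'o _ hmem
    refine ⟨I, fun g hg => hts ?_⟩
    refine ht'sub (hpi ?_)
    intro y hy
    have := hg y hy
    show (g : X → X) y ∈ u y
    rw [show (g : X → X) y = g₀ y from this]
    exact (hu y hy).2
  -- left multiplication is continuous
  have hmul : ∀ g₀ : Equiv.Perm X, Continuous fun h : Equiv.Perm X => g₀ * h := by
    intro g₀
    apply continuous_induced_rng.2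
    apply continuous_pi
    intro x
    show Continuous fun h : Equiv.Perm X => (g₀ * h) x
    simp only [Equiv.Perm.mul_apply]
    exact continuous_of_discreteTopology.comp (hcont x)
  constructor
  · intro hLC
    obtain ⟨K, hK1, -, hKc⟩ :=
      hLC.local_compact_nhds (1 : G) Set.univ Filter.univ_mem
    rw [nhds_subtype_eq_comap] at hK1
    obtain ⟨t, ht, hts⟩ := hK1
    obtain ⟨Y, hY⟩ := factC _ _ ht
    refine ⟨Y, ?_⟩
    have hsub : (Subtype.val ⁻¹' {g : Equiv.Perm X | ∀ y ∈ Y, g y = y} : Set G) ⊆ K := by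
      intro h hh
      apply hts
      apply hY
      intro y hy
      simpa using hh y hy
    have hcl : IsClosed (Subtype.val ⁻¹' {g : Equiv.Perm X | ∀ y ∈ Y, g y = y} : Set G) := by
      have := hclosed Y 1
      simp only [Equiv.Perm.one_apply] at this
      exact this.preimage continuous_subtype_val
    have hcomp := hKc.of_isClosed_subset hcl hsub
    have himg := hcomp.image continuous_subtype_val
    convert himg using 1
    ext g
    constructor
    · rintro ⟨hgG, hgfix⟩
      exact ⟨⟨g, hgG⟩, fun y hy => hgfix y hy, rfl⟩
    · rintro ⟨⟨h, hhG⟩, hfix, rfl⟩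
      exact ⟨hhG, fun y hy => hfix y hy⟩
  · rintro ⟨Y, hS⟩
    set S : Set (Equiv.Perm X) := {g | g ∈ G ∧ ∀ y ∈ Y, g y = y} with hSdef
    refine ⟨fun x n hn => ?_⟩
    rw [nhds_subtype_eq_comap] at hn
    obtain ⟨t, ht, hts⟩ := hn
    obtain ⟨Z, hZ⟩ := factC _ _ ht
    set W : Finset X := Y ∪ Z with hWdef
    set C : Set (Equiv.Perm X) := {g | g ∈ G ∧ ∀ y ∈ W, g y = (x : Equiv.Perm X) y} with hCdef
    -- C is compact
    have hCcomp : IsCompact C := by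
      have hCeq : C = ((fun h => (x : Equiv.Perm X) * h) '' S)
          ∩ {g : Equiv.Perm X | ∀ y ∈ W, g y = (x : Equiv.Perm X) y} := by
        ext g
        constructor
        · rintro ⟨hgG, hgW⟩
          refine ⟨⟨(x : Equiv.Perm X)⁻¹ * g, ⟨?_, ?_⟩, by group⟩, hgW⟩
          · exact mul_mem (inv_mem x.2) hgG
          · intro y hy
            have : g y = (x : Equiv.Perm X) y := hgW y (Finset.mem_union_left _ hy)
            simp [Equiv.Perm.mul_apply, this]
        · rintro ⟨⟨h, ⟨hhG, -⟩, rfl⟩, hW⟩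
          exact ⟨mul_mem x.2 hhG, hW⟩
      rw [hCeq]
      exact (hS.image (hmul x)).inter_right (hclosed W x)
    -- the preimage of C in G is a compact neighbourhood of x inside n
    refine ⟨Subtype.val ⁻¹' C, ?_, ?_, ?_⟩
    · rw [nhds_subtype_eq_comap]
      refine ⟨{g : Equiv.Perm X | ∀ y ∈ W, g y = (x : Equiv.Perm X) y}, ?_, ?_⟩
      · exact (hopen W x).mem_nhds (fun y _ => rfl)
      · intro h hh
        exact ⟨h.2, fun y hy => hh y hy⟩
    · intro h hh
      apply hts
      apply hZ
      intro y hy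
      exact hh.2 y (Finset.mem_union_right _ hy)
    · rw [Subtype.isCompact_iff]
      have : Subtype.val '' (Subtype.val ⁻¹' C : Set G) = C := by
        ext g
        simp only [Set.mem_image, Set.mem_preimage]
        constructor
        · rintro ⟨h, hh, rfl⟩; exact hh
        · intro hg; exact ⟨⟨g, hg.1⟩, hg, rfl⟩
      rw [this]
      exact hCcomp
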